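/- Let p₀, p₁, p₂ ∈ ℂ(x) with p₀ ≠ 0 and P := p₁² − p₀p₂ ≠ 0. Suppose dj, T, IH ∈ Aut_ℂ(K) each fix ℂ(x) pointwise and satisfy dj(y) = P/y, T(y) = p₀·y + p₁, and IH(y) = (−p₁·y − p₂)/(p₀·y + p₁). Then T ∘ dj ∘ T⁻¹ = IH; in particular the de Jonquières involution dj_P with P = p₁² − p₀p₂ is conjugate in Aut_ℂ(K) to the geometric de Jonquières involution IH. -/

import Mathlib

/-- The field `K = ℂ(x, y)` of rational functions in two variables over `ℂ`, realized as the
fraction field of the polynomial ring `ℂ[x, y]`. Its group of `ℂ`-algebra automorphisms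
`K ≃ₐ[ℂ] K` is the plane Cremona group `Cr(2)`. -/
noncomputable abbrev PlaneFunctionField : Type :=
  FractionRing (MvPolynomial (Fin 2) ℂ)

/-- The element `x` of `K = ℂ(x, y)`. -/
noncomputable def Xf : PlaneFunctionField :=
  algebraMap (MvPolynomial (Fin 2) ℂ) PlaneFunctionField (MvPolynomial.X 0)

/-- The element `y` of `K = ℂ(x, y)`. -/
noncomputable def Yf : PlaneFunctionField :=
  algebraMap (MvPolynomial (Fin 2) ℂ) PlaneFunctionField (MvPolynomial.X 1)

/-- The subfield `ℂ(x)` of `K = ℂ(x, y)`. -/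
noncomputable def Cx : IntermediateField ℂ PlaneFunctionField :=
  IntermediateField.adjoin ℂ {Xf}

lemma algEquiv_ext_XY (f g : PlaneFunctionField ≃ₐ[ℂ] PlaneFunctionField)
    (hx : f Xf = g Xf) (hy : f Yf = g Yf) : f = g := by
  suffices h : (f : PlaneFunctionField →+* PlaneFunctionField) = g by
    ext a; exact RingHom.congr_fun h a
  apply IsLocalization.ringHom_ext (nonZeroDivisors (MvPolynomial (Fin 2) ℂ))
  apply MvPolynomial.ringHom_ext
  · intro a
    simp only [RingHom.coe_comp, Function.comp_apply]
    rw [show (MvPolynomial.C a : MvPolynomial (Fin 2) ℂ) = algebraMap ℂ _ a from rfl,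
      ← IsScalarTower.algebraMap_apply]
    exact (f.commutes a).trans (g.commutes a).symm
  · intro i
    fin_cases i
    · exact hx
    · exact hy

set_option synthInstance.maxHeartbeats 1000000

/-- The de Jonquières involution `dj_P : y ↦ P/y`, with `P = p₁² − p₀p₂`, is conjugate (by
`T : y ↦ p₀y + p₁`) in the Cremona group to the geometric de Jonquières involution
`IH : y ↦ (−p₁y − p₂)/(p₀y + p₁)`; indeed `T ∘ dj ∘ T⁻¹ = IH`. -/
theorem deJonquieres_conjugate_geometric
    (p₀ p₁ p₂ : PlaneFunctionField)
    (hp₀ : p₀ ∈ Cx) (hp₁ : p₁ ∈ Cx) (hp₂ : p₂ ∈ Cx)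
    (hp₀0 : p₀ ≠ 0) (hP : p₁ ^ 2 - p₀ * p₂ ≠ 0)
    (dj T IH : PlaneFunctionField ≃ₐ[ℂ] PlaneFunctionField)
    (hdjx : ∀ z ∈ Cx, dj z = z) (hTx : ∀ z ∈ Cx, T z = z) (hIHx : ∀ z ∈ Cx, IH z = z)
    (hdjy : dj Yf = (p₁ ^ 2 - p₀ * p₂) / Yf)
    (hTy : T Yf = p₀ * Yf + p₁)
    (hIHy : IH Yf = (-(p₁ * Yf) - p₂) / (p₀ * Yf + p₁)) :
    T * dj * T⁻¹ = IH := by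
  have hXf : Xf ∈ Cx := IntermediateField.subset_adjoin ℂ {Xf} rfl
  have hYne : Yf ≠ 0 := by
    intro h
    exact MvPolynomial.X_ne_zero (σ := Fin 2) (R := ℂ) 1
      (IsFractionRing.injective (MvPolynomial (Fin 2) ℂ) PlaneFunctionField
        (by rw [map_zero]; exact h))
  have hden : p₀ * Yf + p₁ ≠ 0 := by
    rw [← hTy]
    intro h
    exact hYne (T.injective (by rw [h, map_zero]))
  have hTinvY : T⁻¹ Yf = (Yf - p₁) / p₀ := by
    apply T.injective
    rw [show (T⁻¹ : PlaneFunctionField ≃ₐ[ℂ] PlaneFunctionField) = T.symm from rfl,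
      T.apply_symm_apply]
    rw [map_div₀, map_sub, hTy, hTx p₁ hp₁, hTx p₀ hp₀]
    field_simp
    ring
  apply algEquiv_ext_XY
  · have h1 : T⁻¹ Xf = Xf := by
      apply T.injective
      rw [show (T⁻¹ : PlaneFunctionField ≃ₐ[ℂ] PlaneFunctionField) = T.symm from rfl,
        T.apply_symm_apply, hTx Xf hXf]
    simp only [AlgEquiv.mul_apply]
    rw [h1, hdjx Xf hXf, hTx Xf hXf, hIHx Xf hXf]
  · simp only [AlgEquiv.mul_apply]
    rw [hTinvY, map_div₀, map_sub, hdjx p₁ hp₁, hdjx p₀ hp₀, hdjy,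
      map_div₀, map_sub, map_div₀, map_sub, map_pow, map_mul,
      hTx p₀ hp₀, hTx p₁ hp₁, hTx p₂ hp₂, hTy, hIHy]
    field_simp
    ring
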